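/- Let a be a positive integer and b, d be integers, both nonzero. Suppose p is a prime such that v_p(a) > max{v_p(b), v_p(d)} and v_p(b) ≠ v_p(d). Then the chromatic number of the graph G_{a,b,a,d} equals 2. -/

import Mathlib

open MeasureTheory Filter

/-- The set `R_{a,b,c,d}` of positive rational values `(an+b)/(cn+d)` not equal to `1`. -/
def Rset (a c : ℕ) (b d : ℤ) : Set ℚ :=
  {q : ℚ | (∃ n : ℕ, 0 < n ∧ q = ((a : ℚ) * n + (b : ℚ)) / ((c : ℚ) * n + (d : ℚ))) ∧
    0 < q ∧ q ≠ 1}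

/-- The graph `G(R)` on the positive integers where distinct `m`, `n` are adjacent
iff `m/n ∈ R` or `n/m ∈ R`. -/
def graphOf (R : Set ℚ) : SimpleGraph ℕ+ where
  Adj m n := m ≠ n ∧ (((m : ℚ) / (n : ℚ)) ∈ R ∨ ((n : ℚ) / (m : ℚ)) ∈ R)
  symm := ⟨fun _ _ h => ⟨h.1.symm, h.2.symm⟩⟩
  loopless := ⟨fun _ h => h.1 rfl⟩

section Aux

variable {p : ℕ} [hp : Fact p.Prime]

/-- If `m/n ∈ Rset a a b d`, then `v_p(m) - v_p(n) = v_p(b) - v_p(d)`. -/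
lemma val_diff_of_mem {a : ℕ} (ha : 0 < a) {b d : ℤ} (hb : b ≠ 0) (hd : d ≠ 0)
    (hvb : (padicValInt p b : ℤ) < (padicValInt p (a : ℤ) : ℤ))
    (hvd : (padicValInt p d : ℤ) < (padicValInt p (a : ℤ) : ℤ))
    (m n : ℕ+) (hmem : ((m : ℚ) / (n : ℚ)) ∈ Rset a a b d) :
    padicValRat p m - padicValRat p n = (padicValInt p b : ℤ) - (padicValInt p d : ℤ) := by
  obtain ⟨⟨N, hN, hq⟩, hqpos, _⟩ := hmem
  have hm0 : (m : ℚ) ≠ 0 := by positivity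
  have hn0 : (n : ℚ) ≠ 0 := by positivity
  have hq0 : (m : ℚ) / (n : ℚ) ≠ 0 := ne_of_gt hqpos
  have hy0 : ((a : ℚ) * N + (d : ℚ)) ≠ 0 := by
    intro h; rw [h, div_zero] at hq; exact hq0 hq
  have hx0 : ((a : ℚ) * N + (b : ℚ)) ≠ 0 := by
    intro h
    rw [hq, h, zero_div] at hq0
    exact hq0 rfl
  have haN : ((a : ℚ) * N) ≠ 0 := by
    have : (N : ℚ) ≠ 0 := Nat.cast_ne_zero.mpr hN.ne'
    have ha' : (a : ℚ) ≠ 0 := Nat.cast_ne_zero.mpr ha.ne'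
    exact mul_ne_zero ha' this
  have hvala : padicValRat p ((a : ℚ)) = (padicValInt p (a : ℤ) : ℤ) := by
    rw [show ((a : ℚ)) = (((a : ℤ) : ℚ)) by push_cast; ring, padicValRat.of_int]
  have hvalaN : (padicValInt p (a : ℤ) : ℤ) ≤ padicValRat p ((a : ℚ) * N) := by
    rw [padicValRat.mul (Nat.cast_ne_zero.mpr ha.ne') (Nat.cast_ne_zero.mpr hN.ne'), hvala,
      padicValRat.of_nat]
    simp
  have hvb' : padicValRat p ((b : ℚ)) = (padicValInt p b : ℤ) := padicValRat.of_int
  have hvd' : padicValRat p ((d : ℚ)) = (padicValInt p d : ℤ) := padicValRat.of_int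
  have hxval : padicValRat p ((a : ℚ) * N + (b : ℚ)) = (padicValInt p b : ℤ) := by
    rw [add_comm]
    rw [padicValRat.add_eq_of_lt (by rwa [add_comm] at hx0)
      (Int.cast_ne_zero.mpr hb) haN (by rw [hvb']; exact lt_of_lt_of_le hvb hvalaN), hvb']
  have hyval : padicValRat p ((a : ℚ) * N + (d : ℚ)) = (padicValInt p d : ℤ) := by
    rw [add_comm]
    rw [padicValRat.add_eq_of_lt (by rwa [add_comm] at hy0)
      (Int.cast_ne_zero.mpr hd) haN (by rw [hvd']; exact lt_of_lt_of_le hvd hvalaN), hvd']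
  have := congrArg (padicValRat p) hq
  rwa [padicValRat.div hm0 hn0, padicValRat.div hx0 hy0, hxval, hyval] at this

end Aux

theorem chromatic_eq_two_of_distinct_valuation
    (a : ℕ) (ha : 0 < a) (b d : ℤ) (hb : b ≠ 0) (hd : d ≠ 0)
    (p : ℕ) (hp : p.Prime)
    (hval : max (padicValInt p b) (padicValInt p d) < padicValInt p (a : ℤ))
    (hne : padicValInt p b ≠ padicValInt p d) :
    (graphOf (Rset a a b d)).chromaticNumber = 2 := by
  haveI : Fact p.Prime := ⟨hp⟩
  set G := graphOf (Rset a a b d) with hG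
  set c : ℤ := (padicValInt p b : ℤ) - (padicValInt p d : ℤ) with hc
  have hc0 : c ≠ 0 := by
    simp only [hc, sub_ne_zero]
    exact_mod_cast hne
  have hvb : (padicValInt p b : ℤ) < (padicValInt p (a : ℤ) : ℤ) := by
    exact_mod_cast lt_of_le_of_lt (le_max_left _ _) hval
  have hvd : (padicValInt p d : ℤ) < (padicValInt p (a : ℤ) : ℤ) := by
    exact_mod_cast lt_of_le_of_lt (le_max_right _ _) hval
  -- key: adjacent vertices have valuations differing by exactly ±c
  have key : ∀ m n : ℕ+, G.Adj m n →
      padicValRat p m = padicValRat p n + c ∨ padicValRat p n = padicValRat p m + c := by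
    intro m n hadj
    rcases hadj.2 with h | h
    · left
      have := val_diff_of_mem ha hb hd hvb hvd m n h
      linarith [this]
    · right
      have := val_diff_of_mem ha hb hd hvb hvd n m h
      linarith [this]
  -- the 2-coloring
  have hcol2 : G.Colorable 2 := by
    have C : G.Coloring (ZMod 2) := by
      refine SimpleGraph.Coloring.mk
        (fun n => ((padicValRat p n / c : ℤ) : ZMod 2)) ?_
      intro m n hadj
      have hdiv : ∀ x : ℤ, (x + c) / c = x / c + 1 := by
        intro x
        have := Int.add_mul_ediv_right x 1 hc0
        simpa using this
      have h1 : (1 : ZMod 2) ≠ 0 := by decide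
      rcases key m n hadj with h | h
      · rw [h, hdiv]
        push_cast
        intro hcontra
        exact h1 (by linear_combination hcontra)
      · rw [show padicValRat p ((n : ℕ) : ℚ) / c = padicValRat p ((m : ℕ) : ℚ) / c + 1 by
          rw [h, hdiv]]
        push_cast
        intro hcontra
        exact h1 (by linear_combination -hcontra)
    have := C.colorable
    simpa using this
  -- there is an edge
  have hbd : b ≠ d := fun h => hne (by rw [h])
  obtain ⟨m, n, hadj⟩ : ∃ m n : ℕ+, G.Adj m n := by
    obtain ⟨N, hN0, hmpos, hnpos⟩ :
        ∃ N : ℕ, 0 < N ∧ 0 < (a : ℤ) * N + b ∧ 0 < (a : ℤ) * N + d := by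
      refine ⟨b.natAbs + d.natAbs + 1, by omega, ?_, ?_⟩ <;>
      · have hAN : ((b.natAbs + d.natAbs + 1 : ℕ) : ℤ)
            ≤ (a : ℤ) * ((b.natAbs + d.natAbs + 1 : ℕ) : ℤ) :=
          le_mul_of_one_le_left (by positivity) (by exact_mod_cast ha)
        omega
    have hmn : (a : ℤ) * N + b ≠ (a : ℤ) * N + d := by omega
    refine ⟨⟨((a : ℤ) * N + b).toNat, by omega⟩, ⟨((a : ℤ) * N + d).toNat, by omega⟩, ?_, ?_⟩
    · intro h
      apply hmn
      have := congrArg (fun x : ℕ+ => ((x : ℕ) : ℤ)) h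
      simpa [Int.toNat_of_nonneg hmpos.le, Int.toNat_of_nonneg hnpos.le] using this
    · left
      show ((((a : ℤ) * N + b).toNat : ℕ) : ℚ) / ((((a : ℤ) * N + d).toNat : ℕ) : ℚ)
        ∈ Rset a a b d
      have hmQ : ((((a : ℤ) * N + b).toNat : ℕ) : ℚ)
          = ((a : ℚ) * N + (b : ℚ)) := by
        have h1 : (((a : ℤ) * N + b).toNat : ℤ) = (a : ℤ) * N + b :=
          Int.toNat_of_nonneg hmpos.le
        have h2 : ((((a : ℤ) * N + b).toNat : ℤ) : ℚ) = ((a : ℚ) * N + (b : ℚ)) := by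
          rw [h1]; push_cast; ring
        exact_mod_cast h2
      have hnQ : ((((a : ℤ) * N + d).toNat : ℕ) : ℚ)
          = ((a : ℚ) * N + (d : ℚ)) := by
        have h1 : (((a : ℤ) * N + d).toNat : ℤ) = (a : ℤ) * N + d :=
          Int.toNat_of_nonneg hnpos.le
        have h2 : ((((a : ℤ) * N + d).toNat : ℤ) : ℚ) = ((a : ℚ) * N + (d : ℚ)) := by
          rw [h1]; push_cast; ring
        exact_mod_cast h2
      rw [hmQ, hnQ]
      have hmQpos : (0 : ℚ) < ((a : ℚ) * N + (b : ℚ)) := by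
        have : (0 : ℚ) < (((a : ℤ) * N + b : ℤ) : ℚ) := by exact_mod_cast hmpos
        push_cast at this
        linarith
      have hnQpos : (0 : ℚ) < ((a : ℚ) * N + (d : ℚ)) := by
        have : (0 : ℚ) < (((a : ℤ) * N + d : ℤ) : ℚ) := by exact_mod_cast hnpos
        push_cast at this
        linarith
      refine ⟨⟨N, hN0, rfl⟩, div_pos hmQpos hnQpos, ?_⟩
      rw [Ne, div_eq_one_iff_eq hnQpos.ne']
      intro h
      apply hmn
      have : (((a : ℤ) * N + b : ℤ) : ℚ) = (((a : ℤ) * N + d : ℤ) : ℚ) := by push_cast; linarith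
      exact_mod_cast this
  have h2le : 2 ≤ G.chromaticNumber := by
    by_contra hlt
    push_neg at hlt
    have h1 : G.chromaticNumber ≤ 1 := by simpa using hlt
    obtain ⟨C1⟩ := SimpleGraph.chromaticNumber_le_iff_colorable.mp h1
    exact C1.valid hadj (Subsingleton.elim _ _)
  exact le_antisymm (by simpa using hcol2.chromaticNumber_le) h2le
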